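/- Let L ≥ 2, D ≥ 1, and V ≥ 1 be integers. Let X ∈ ℝ^{L×D} have rows X^1, …, X^L of Euclidean norm 1 with all pairwise inner products nonnegative (⟨X^{l1}, X^{l2}⟩ ≥ 0 for all l1, l2). Let g ∈ ℝ^D be a scaling vector and W ∈ ℝ^{D×V} an unembedding matrix. For each l define logits Z^l ∈ ℝ^V by Z^l_k = ∑_j X^l_j · g_j · W_{jk} (i.e., Z^l = X^l · diag(g) · W) and probabilities P^l = softmax(Z^l), where softmax(z)_i = exp(z_i)/∑_j exp(z_j). Then the minimum total variation distance between the output distributions of distinct tokens satisfies min_{l1 ≠ l2} (1/2)·∑_{k} |P^{l1}_k − P^{l2}_k| ≤ (√V / 2) · ‖diag(g)·W‖_2 · √( 2 − 2·√( (1/(L−1)) · (L/eRank(X) − 1) ) ). -/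

import Mathlib

open Matrix
open scoped Matrix.Norms.L2Operator

/-- `XᵀX` is Hermitian (symmetric) for a real matrix `X`. -/
theorem xtx_isHermitian {L D : ℕ} (X : Matrix (Fin L) (Fin D) ℝ) :
    (Xᵀ * X).IsHermitian := by
  simpa [Matrix.conjTranspose_eq_transpose_of_trivial] using
    Matrix.isHermitian_conjTranspose_mul_self X

/-- The effective rank `eRank(X) = exp(−∑_j p_j log p_j)`, where `λ_1, …, λ_D` are the
eigenvalues (with multiplicity) of the positive semidefinite matrix `XᵀX` and
`p_j = λ_j / ∑_k λ_k` (with the convention `0 · log 0 = 0`). -/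
noncomputable def eRank {L D : ℕ} (X : Matrix (Fin L) (Fin D) ℝ) : ℝ :=
  Real.exp (-∑ j,
    ((xtx_isHermitian X).eigenvalues j / ∑ k, (xtx_isHermitian X).eigenvalues k) *
      Real.log
        ((xtx_isHermitian X).eigenvalues j / ∑ k, (xtx_isHermitian X).eigenvalues k))

open Finset

section Aux

/-- Key analytic estimate: a linear functional (with ℓ² norm at most one) applied to the
difference of two softmax vectors is at most the ℓ² distance of the logits. -/
lemma softmax_core {V : ℕ} (hV : 0 < V) (z1 z2 u : Fin V → ℝ)
    (hu : ∑ k, u k ^ 2 ≤ 1) :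
    ∑ k, u k * (Real.exp (z1 k) / ∑ j, Real.exp (z1 j)
      - Real.exp (z2 k) / ∑ j, Real.exp (z2 j)) ≤
    Real.sqrt (∑ k, (z1 k - z2 k) ^ 2) := by
  set d : Fin V → ℝ := fun k => z1 k - z2 k with hd
  set C := Real.sqrt (∑ k, d k ^ 2) with hC
  set N : Fin V → ℝ → ℝ := fun k t => Real.exp (z2 k + t * d k) with hN
  set S : ℝ → ℝ := fun t => ∑ j, N j t with hS
  have hSpos : ∀ t, 0 < S t := fun t =>
    Finset.sum_pos (fun j _ => Real.exp_pos _) ⟨⟨0, hV⟩, mem_univ _⟩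
  set f : ℝ → ℝ := fun t => ∑ k, u k * (N k t / S t) with hf
  set f' : ℝ → ℝ := fun t =>
    ∑ k, u k * (((N k t * d k) * S t - N k t * ∑ j, N j t * d j) / S t ^ 2) with hf'
  -- derivative
  have hderiv : ∀ t, HasDerivAt f (f' t) t := by
    intro t
    apply HasDerivAt.fun_sum
    intro k _
    apply HasDerivAt.const_mul
    have hNk : ∀ i, HasDerivAt (fun t => N i t) (N i t * d i) t := by
      intro i
      simpa using (((hasDerivAt_mul_const (d i)).const_add (z2 i)).exp)
    have hSd : HasDerivAt S (∑ j, N j t * d j) t := HasDerivAt.fun_sum fun j _ => hNk j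
    exact (hNk k).div hSd (hSpos t).ne'
  -- bound on derivative
  have aux : ∀ a b c e : ℝ, c ≠ 0 → (a * b * c - a * e) / c ^ 2 = (a / c) * (b - e / c) := by
    intro a b c e hc; field_simp
  have hbound : ∀ t, |f' t| ≤ C := by
    intro t
    have hS0 : S t ≠ 0 := (hSpos t).ne'
    set p : Fin V → ℝ := fun k => N k t / S t with hp
    set m : ℝ := ∑ j, d j * p j with hm
    have hp0 : ∀ k, 0 ≤ p k := fun k => div_nonneg (Real.exp_pos _).le (hSpos t).le
    have hp1 : ∀ k, p k ≤ 1 := by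
      intro k
      rw [hp, div_le_one (hSpos t)]
      exact Finset.single_le_sum (f := fun j => N j t)
        (fun j _ => (Real.exp_pos _).le) (mem_univ k)
    have hpsum : ∑ k, p k = 1 := by
      rw [hp, ← Finset.sum_div, div_self hS0]
    have hmdiv : m = (∑ j, N j t * d j) / S t := by
      rw [hm, Finset.sum_div]
      exact Finset.sum_congr rfl fun j _ => by rw [hp]; ring
    have hf'eq : f' t = ∑ k, u k * (p k * (d k - m)) := by
      rw [hf']
      refine Finset.sum_congr rfl fun k _ => ?_
      rw [hmdiv, aux _ _ _ _ hS0, hp]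
    have hq : ∑ k, (p k * (d k - m)) ^ 2 ≤ ∑ k, d k ^ 2 := by
      have h1 : ∀ k, (p k * (d k - m)) ^ 2 ≤ p k * (d k - m) ^ 2 := by
        intro k
        rw [mul_pow]
        apply mul_le_mul_of_nonneg_right _ (sq_nonneg _)
        nlinarith [hp0 k, hp1 k]
      have h2 : ∑ k, p k * (d k - m) ^ 2 = (∑ k, p k * d k ^ 2) - m ^ 2 := by
        have e : ∀ k, p k * (d k - m) ^ 2
            = p k * d k ^ 2 - (2 * m) * (d k * p k) + m ^ 2 * p k := fun k => by ring
        rw [Finset.sum_congr rfl fun k _ => e k]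
        rw [Finset.sum_add_distrib, Finset.sum_sub_distrib, ← Finset.mul_sum,
          ← Finset.mul_sum, ← hm, hpsum]
        ring
      have h3 : (∑ k, p k * d k ^ 2) ≤ ∑ k, d k ^ 2 := by
        refine Finset.sum_le_sum fun k _ => ?_
        nlinarith [hp1 k, hp0 k, sq_nonneg (d k)]
      calc ∑ k, (p k * (d k - m)) ^ 2 ≤ ∑ k, p k * (d k - m) ^ 2 :=
            Finset.sum_le_sum fun k _ => h1 k
        _ = (∑ k, p k * d k ^ 2) - m ^ 2 := h2
        _ ≤ ∑ k, p k * d k ^ 2 := by nlinarith [sq_nonneg m]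
        _ ≤ ∑ k, d k ^ 2 := h3
    have cs := Finset.sum_mul_sq_le_sq_mul_sq univ u (fun k => p k * (d k - m))
    have hsq : (f' t) ^ 2 ≤ ∑ k, d k ^ 2 := by
      rw [hf'eq]
      calc (∑ k, u k * (p k * (d k - m))) ^ 2
          ≤ (∑ k, u k ^ 2) * ∑ k, (p k * (d k - m)) ^ 2 := cs
        _ ≤ 1 * ∑ k, d k ^ 2 := by
            apply mul_le_mul hu hq (by positivity) one_pos.le
        _ = ∑ k, d k ^ 2 := one_mul _
    calc |f' t| = Real.sqrt ((f' t) ^ 2) := (Real.sqrt_sq_eq_abs _).symm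
      _ ≤ C := Real.sqrt_le_sqrt hsq
  -- mean value
  have key : ‖f 1 - f 0‖ ≤ C * (1 - 0) :=
    norm_image_sub_le_of_norm_deriv_le_segment' (f' := f')
      (fun x _ => (hderiv x).hasDerivWithinAt)
      (fun x _ => by simpa using hbound x) 1 ⟨zero_le_one, le_refl 1⟩
  have hN1 : ∀ k, N k 1 = Real.exp (z1 k) := by
    intro k; rw [hN]; simp only; congr 1; rw [hd]; ring
  have hN0 : ∀ k, N k 0 = Real.exp (z2 k) := by
    intro k; rw [hN]; simp only; congr 1; ring
  have hS1 : S 1 = ∑ j, Real.exp (z1 j) := by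
    rw [hS]; exact Finset.sum_congr rfl fun j _ => hN1 j
  have hS0' : S 0 = ∑ j, Real.exp (z2 j) := by
    rw [hS]; exact Finset.sum_congr rfl fun j _ => hN0 j
  have hf1 : f 1 = ∑ k, u k * (Real.exp (z1 k) / ∑ j, Real.exp (z1 j)) := by
    rw [hf]; exact Finset.sum_congr rfl fun k _ => by rw [hN1 k, hS1]
  have hf0 : f 0 = ∑ k, u k * (Real.exp (z2 k) / ∑ j, Real.exp (z2 j)) := by
    rw [hf]; exact Finset.sum_congr rfl fun k _ => by rw [hN0 k, hS0']
  have hfinal : ∑ k, u k * (Real.exp (z1 k) / ∑ j, Real.exp (z1 j)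
      - Real.exp (z2 k) / ∑ j, Real.exp (z2 j)) = f 1 - f 0 := by
    rw [hf1, hf0, ← Finset.sum_sub_distrib]
    exact Finset.sum_congr rfl fun k _ => by ring
  rw [hfinal]
  calc f 1 - f 0 ≤ |f 1 - f 0| := le_abs_self _
    _ ≤ C := by simpa using key

/-- Softmax is 1-Lipschitz in the ℓ² norm. -/
lemma softmax_sq_le {V : ℕ} (hV : 0 < V) (z1 z2 : Fin V → ℝ) :
    ∑ k, (Real.exp (z1 k) / (∑ j, Real.exp (z1 j))
        - Real.exp (z2 k) / (∑ j, Real.exp (z2 j))) ^ 2 ≤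
    ∑ k, (z1 k - z2 k) ^ 2 := by
  set q : Fin V → ℝ := fun k => Real.exp (z1 k) / (∑ j, Real.exp (z1 j))
      - Real.exp (z2 k) / (∑ j, Real.exp (z2 j)) with hq
  have hq2 : (0:ℝ) ≤ ∑ k, q k ^ 2 := by positivity
  rcases eq_or_lt_of_le hq2 with h | h
  · rw [← h]; positivity
  · set c := Real.sqrt (∑ k, q k ^ 2) with hc
    have hcpos : 0 < c := Real.sqrt_pos.mpr h
    have hcsq : c ^ 2 = ∑ k, q k ^ 2 := Real.sq_sqrt hq2
    have hu : ∑ k, (q k / c) ^ 2 ≤ 1 := by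
      have : ∑ k, (q k / c) ^ 2 = (∑ k, q k ^ 2) / c ^ 2 := by
        rw [Finset.sum_div]
        exact Finset.sum_congr rfl fun k _ => by rw [div_pow]
      rw [this, hcsq, div_self (by positivity)]
    have hcore := softmax_core hV z1 z2 (fun k => q k / c) hu
    have hlhs : ∑ k, (q k / c) * q k = (∑ k, q k ^ 2) / c := by
      rw [Finset.sum_div]
      exact Finset.sum_congr rfl fun k _ => by ring
    have hthis : (∑ k, q k ^ 2) / c ≤ Real.sqrt (∑ k, (z1 k - z2 k) ^ 2) := by
      rw [← hlhs]
      exact hcore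
    have hcle : c ≤ Real.sqrt (∑ k, (z1 k - z2 k) ^ 2) := by
      rwa [← hcsq, pow_two, mul_div_assoc, div_self hcpos.ne', mul_one] at hthis
    calc ∑ k, q k ^ 2 = c ^ 2 := hcsq.symm
      _ ≤ Real.sqrt (∑ k, (z1 k - z2 k) ^ 2) ^ 2 := by
          exact pow_le_pow_left₀ hcpos.le hcle 2
      _ = ∑ k, (z1 k - z2 k) ^ 2 := Real.sq_sqrt (by positivity)

lemma trace_conj_unitary {D : ℕ} (U B : Matrix (Fin D) (Fin D) ℝ)
    (hU : star U * U = 1) : (U * B * star U).trace = B.trace := by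
  rw [Matrix.trace_mul_cycle, hU, Matrix.one_mul]

lemma sum_eig_eq_trace {D : ℕ} {A : Matrix (Fin D) (Fin D) ℝ} (hA : A.IsHermitian) :
    ∑ i, hA.eigenvalues i = A.trace := by
  have hU : star ((hA.eigenvectorUnitary : Matrix (Fin D) (Fin D) ℝ))
      * (hA.eigenvectorUnitary : Matrix (Fin D) (Fin D) ℝ) = 1 :=
    (Unitary.mem_iff.mp hA.eigenvectorUnitary.2).1
  conv_rhs => rw [hA.spectral_theorem, Unitary.conjStarAlgAut_apply]
  rw [trace_conj_unitary _ _ hU, Matrix.trace_diagonal]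
  simp

lemma sum_sq_eig_eq_trace {D : ℕ} {A : Matrix (Fin D) (Fin D) ℝ} (hA : A.IsHermitian) :
    ∑ i, hA.eigenvalues i ^ 2 = (A * A).trace := by
  set U := (hA.eigenvectorUnitary : Matrix (Fin D) (Fin D) ℝ) with hUdef
  have hU : star U * U = 1 := (Unitary.mem_iff.mp hA.eigenvectorUnitary.2).1
  set Dm := Matrix.diagonal (RCLike.ofReal ∘ hA.eigenvalues : Fin D → ℝ) with hDm
  have hAA : A * A = U * (Dm * Dm) * star U := by
    conv_lhs => rw [hA.spectral_theorem, Unitary.conjStarAlgAut_apply]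
    simp only [← hUdef, ← hDm, Matrix.mul_assoc]
    congr 1
    congr 1
    rw [← Matrix.mul_assoc (star U) U, hU, Matrix.one_mul]
  rw [hAA, trace_conj_unitary _ _ hU, Matrix.diagonal_mul_diagonal, Matrix.trace_diagonal]
  simp [pow_two]

lemma entropy_le_log_Q {n : ℕ} (p : Fin n → ℝ) (hp0 : ∀ i, 0 ≤ p i)
    (hp1 : ∑ i, p i = 1) :
    ∑ i, p i * Real.log (p i) ≤ Real.log (∑ i, p i ^ 2) := by
  set Q := ∑ i, p i ^ 2 with hQ
  have hQ0 : 0 ≤ Q := by positivity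
  have hQpos : 0 < Q := by
    rcases eq_or_lt_of_le hQ0 with h | h
    · exfalso
      have hall : ∀ i ∈ univ, p i ^ 2 = 0 :=
        (Finset.sum_eq_zero_iff_of_nonneg (fun i _ => sq_nonneg _)).mp h.symm
      have : ∑ i, p i = 0 :=
        Finset.sum_eq_zero fun i hi => pow_eq_zero_iff (n := 2) (by norm_num) |>.mp (hall i hi)
      rw [hp1] at this; norm_num at this
    · exact h
  have hterm : ∀ i, p i * Real.log (p i) ≤ p i * Real.log Q + p i ^ 2 / Q - p i := by
    intro i
    rcases eq_or_lt_of_le (hp0 i) with h | h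
    · simp [← h]
    · have hlog := Real.log_le_sub_one_of_pos (div_pos h hQpos)
      rw [Real.log_div h.ne' hQpos.ne'] at hlog
      have := mul_le_mul_of_nonneg_left hlog (hp0 i)
      have hdiv : p i * (p i / Q) = p i ^ 2 / Q := by field_simp
      nlinarith
  calc ∑ i, p i * Real.log (p i)
      ≤ ∑ i, (p i * Real.log Q + p i ^ 2 / Q - p i) := Finset.sum_le_sum fun i _ => hterm i
    _ = (∑ i, p i) * Real.log Q + (∑ i, p i ^ 2) / Q - ∑ i, p i := by
        rw [Finset.sum_sub_distrib, Finset.sum_add_distrib, ← Finset.sum_mul, ← Finset.sum_div]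
    _ = Real.log Q := by rw [hp1, ← hQ, div_self hQpos.ne']; ring

lemma mulvec_norm_step {D V : ℕ} (g : Fin D → ℝ) (W : Matrix (Fin D) (Fin V) ℝ)
    (v : Fin D → ℝ) :
    Real.sqrt (∑ k, (∑ j, v j * (g j * W j k)) ^ 2) ≤
      ‖Matrix.diagonal g * W‖ * Real.sqrt (∑ j, v j ^ 2) := by
  set M := Matrix.diagonal g * W with hM
  set ev : EuclideanSpace ℝ (Fin D) := (WithLp.equiv 2 (Fin D → ℝ)).symm v with hev
  have hnormv : ‖ev‖ = Real.sqrt (∑ j, v j ^ 2) := by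
    rw [EuclideanSpace.norm_eq]
    congr 1
    exact Finset.sum_congr rfl fun j _ => by rw [Real.norm_eq_abs, sq_abs]; rfl
  have hMv : ∀ k, (Mᵀ *ᵥ (ev : Fin D → ℝ)) k = ∑ j, v j * (g j * W j k) := by
    intro k
    simp only [Matrix.mulVec, dotProduct, Matrix.transpose_apply, hM,
      Matrix.diagonal_mul]
    exact Finset.sum_congr rfl fun j _ => by rw [show (ev j : ℝ) = v j from rfl]; ring
  have hnormMv : ‖(EuclideanSpace.equiv (Fin V) ℝ).symm (Mᵀ *ᵥ (ev : Fin D → ℝ))‖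
      = Real.sqrt (∑ k, (∑ j, v j * (g j * W j k)) ^ 2) := by
    rw [EuclideanSpace.norm_eq]
    congr 1
    refine Finset.sum_congr rfl fun k _ => ?_
    rw [Real.norm_eq_abs, sq_abs]
    have : ((EuclideanSpace.equiv (Fin V) ℝ).symm (Mᵀ *ᵥ (ev : Fin D → ℝ))) k
        = (Mᵀ *ᵥ (ev : Fin D → ℝ)) k := rfl
    rw [this, hMv k]
  have hle := Matrix.l2_opNorm_mulVec Mᵀ ev
  have hT : ‖Mᵀ‖ = ‖M‖ := by
    rw [← Matrix.conjTranspose_eq_transpose_of_trivial]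
    exact Matrix.l2_opNorm_conjTranspose M
  rw [hnormMv, hnormv, hT] at hle
  exact hle

end Aux

set_option maxHeartbeats 1000000 in
/-- **Probability Distinguishability Bound**: with unit-norm rows `X^l` having
pairwise nonnegative inner products, logits `Z^l = X^l · diag(g) · W` and output
distributions `P^l = softmax(Z^l)`, the minimum total variation distance between the
output distributions of distinct tokens is at most
`(√V / 2) · ‖diag(g)·W‖₂ · √(2 − 2·√((1/(L−1)) · (L/eRank(X) − 1)))`,
where `‖·‖₂` is the spectral (ℓ²→ℓ² operator) norm. -/
theorem probability_distinguishability_bound (L D V : ℕ)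
    (hL : 2 ≤ L) (hD : 1 ≤ D) (hV : 1 ≤ V)
    (X : Matrix (Fin L) (Fin D) ℝ)
    (hrow : ∀ l, ∑ j, (X l j) ^ 2 = 1)
    (hnonneg : ∀ l1 l2, 0 ≤ ∑ j, X l1 j * X l2 j)
    (g : Fin D → ℝ) (W : Matrix (Fin D) (Fin V) ℝ)
    (Z : Fin L → Fin V → ℝ) (hZ : ∀ l k, Z l k = ∑ j, X l j * g j * W j k)
    (P : Fin L → Fin V → ℝ)
    (hP : ∀ l k, P l k = Real.exp (Z l k) / ∑ j, Real.exp (Z l j))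
    (hne : (Finset.univ.filter fun p : Fin L × Fin L => p.1 ≠ p.2).Nonempty) :
    (Finset.univ.filter fun p : Fin L × Fin L => p.1 ≠ p.2).inf' hne
        (fun p => (1 / 2) * ∑ k, |P p.1 k - P p.2 k|) ≤
      (Real.sqrt V / 2) * ‖Matrix.diagonal g * W‖ *
        Real.sqrt (2 - 2 * Real.sqrt ((1 / ((L : ℝ) - 1)) * ((L : ℝ) / _root_.eRank X - 1))) := by
  have hV0 : 0 < V := hV
  have hL2 : (2:ℝ) ≤ (L:ℝ) := by exact_mod_cast hL
  have hL0 : (0:ℝ) < L := by linarith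
  have hL1 : (0:ℝ) < (L:ℝ) - 1 := by linarith
  -- eigenvalues
  have hpsd : (Xᵀ * X).PosSemidef := by
    simpa [Matrix.conjTranspose_eq_transpose_of_trivial] using
      Matrix.posSemidef_conjTranspose_mul_self X
  have hlam0 : ∀ i, 0 ≤ (xtx_isHermitian X).eigenvalues i := fun i =>
    hpsd.eigenvalues_nonneg i
  have hones : ∀ l, ∑ j, X l j * X l j = 1 := fun l => by
    rw [← hrow l]; exact Finset.sum_congr rfl fun j _ => (pow_two _).symm
  have hT : ∑ k, (xtx_isHermitian X).eigenvalues k = (L:ℝ) := by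
    rw [sum_eig_eq_trace, Matrix.trace]
    simp only [Matrix.diag_apply, Matrix.mul_apply, Matrix.transpose_apply]
    rw [Finset.sum_comm, Finset.sum_congr rfl fun l _ => hones l]
    simp
  have hS2 : ∑ i, (xtx_isHermitian X).eigenvalues i ^ 2
      = ∑ a, ∑ b, (∑ j, X a j * X b j) ^ 2 := by
    rw [sum_sq_eig_eq_trace, Matrix.trace]
    simp only [Matrix.diag_apply, Matrix.mul_apply, Matrix.transpose_apply]
    calc ∑ j, ∑ j', (∑ l, X l j * X l j') * (∑ l', X l' j' * X l' j)
        = ∑ j, ∑ j', ∑ l, ∑ l', (X l j * X l j') * (X l' j' * X l' j) := by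
          exact Finset.sum_congr rfl fun j _ => Finset.sum_congr rfl fun j' _ =>
            Finset.sum_mul_sum _ _ _ _
      _ = ∑ j, ∑ l, ∑ j', ∑ l', (X l j * X l j') * (X l' j' * X l' j) := by
          exact Finset.sum_congr rfl fun j _ => Finset.sum_comm
      _ = ∑ l, ∑ j, ∑ j', ∑ l', (X l j * X l j') * (X l' j' * X l' j) := Finset.sum_comm
      _ = ∑ l, ∑ j, ∑ l', ∑ j', (X l j * X l j') * (X l' j' * X l' j) := by
          exact Finset.sum_congr rfl fun l _ => Finset.sum_congr rfl fun j _ =>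
            Finset.sum_comm
      _ = ∑ l, ∑ l', ∑ j, ∑ j', (X l j * X l j') * (X l' j' * X l' j) := by
          exact Finset.sum_congr rfl fun l _ => Finset.sum_comm
      _ = ∑ l, ∑ l', (∑ j, X l j * X l' j) * (∑ j', X l j' * X l' j') := by
          refine Finset.sum_congr rfl fun l _ => Finset.sum_congr rfl fun l' _ => ?_
          rw [Finset.sum_mul_sum]
          exact Finset.sum_congr rfl fun j _ => Finset.sum_congr rfl fun j' _ => by ring
      _ = ∑ a, ∑ b, (∑ j, X a j * X b j) ^ 2 := by
          exact Finset.sum_congr rfl fun a _ => Finset.sum_congr rfl fun b _ =>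
            (pow_two _).symm
  -- probability vector on eigenvalues
  set pr : Fin D → ℝ := fun i => (xtx_isHermitian X).eigenvalues i / (L:ℝ) with hpr
  have hpr0 : ∀ i, 0 ≤ pr i := fun i => div_nonneg (hlam0 i) hL0.le
  have hpr1 : ∑ i, pr i = 1 := by rw [hpr, ← Finset.sum_div, hT, div_self hL0.ne']
  set Q := ∑ i, pr i ^ 2 with hQdef
  have hQ0 : (0:ℝ) ≤ Q := by positivity
  have hchev := sq_sum_le_card_mul_sum_sq (s := (univ : Finset (Fin D))) (f := pr)
  rw [hpr1, Finset.card_univ, Fintype.card_fin, one_pow, ← hQdef] at hchev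
  have hQpos : 0 < Q := by
    by_contra hq
    push_neg at hq
    have : (D:ℝ) * Q ≤ 0 := mul_nonpos_of_nonneg_of_nonpos (Nat.cast_nonneg D) hq
    linarith
  have hQeq : Q = (∑ a, ∑ b, (∑ j, X a j * X b j) ^ 2) / (L:ℝ)^2 := by
    rw [hQdef, ← hS2, Finset.sum_div]
    exact Finset.sum_congr rfl fun i _ => by rw [hpr]; rw [div_pow]
  -- eRank bound
  have heq2 : ∀ j, (xtx_isHermitian X).eigenvalues j
      / ∑ k, (xtx_isHermitian X).eigenvalues k = pr j := fun j => by rw [hT, hpr]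
  have heRank_eq : _root_.eRank X = Real.exp (-∑ j, pr j * Real.log (pr j)) := by
    unfold _root_.eRank
    congr 2
    exact Finset.sum_congr rfl fun j _ => by rw [heq2 j]
  have hent := entropy_le_log_Q pr hpr0 hpr1
  have h1Q : 1 / Q ≤ _root_.eRank X := by
    rw [heRank_eq]
    calc 1/Q = Real.exp (-Real.log Q) := by rw [Real.exp_neg, Real.exp_log hQpos, one_div]
      _ ≤ _ := Real.exp_le_exp.mpr (neg_le_neg hent)
  have heRpos : 0 < _root_.eRank X := lt_of_lt_of_le (by positivity) h1Q
  have hLQ : (L:ℝ) / _root_.eRank X ≤ (L:ℝ) * Q := by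
    rw [div_le_iff₀ heRpos]
    have h1 : 1 ≤ _root_.eRank X * Q := (div_le_iff₀ hQpos).mp h1Q
    nlinarith [hL0]
  set Ssum := ∑ a, ∑ b, (∑ j, X a j * X b j) ^ 2 with hSsum
  have hLQ2 : (L:ℝ) / _root_.eRank X - 1 ≤ (Ssum - L) / L := by
    have hQL : (L:ℝ) * Q = Ssum / L := by
      rw [hQeq]; field_simp
    rw [hQL] at hLQ
    have heq : (Ssum - L)/(L:ℝ) = Ssum/(L:ℝ) - 1 := by field_simp
    rw [heq]; linarith
  -- off-diagonal decomposition
  have hcard : (((Finset.univ.filter fun p : Fin L × Fin L => p.1 ≠ p.2)).card : ℝ)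
      = (L:ℝ) * L - L := by
    have hfilt_eq : (Finset.univ.filter fun p : Fin L × Fin L => p.1 ≠ p.2)
        = (univ : Finset (Fin L)).offDiag := by
      ext p; simp [Finset.mem_offDiag]
    rw [hfilt_eq, Finset.offDiag_card, Finset.card_univ, Fintype.card_fin]
    have hle : L ≤ L * L := Nat.le_mul_of_pos_left L (by omega)
    rw [Nat.cast_sub hle]
    push_cast
    ring
  have hdiagsum : ∑ p ∈ Finset.univ.filter (fun p : Fin L × Fin L => p.1 = p.2),
      (∑ j, X p.1 j * X p.2 j) ^ 2 = (L:ℝ) := by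
    rw [Finset.sum_filter, Fintype.sum_prod_type]
    simp only [Finset.sum_ite_eq, Finset.sum_ite_eq', Finset.mem_univ, if_true]
    rw [Finset.sum_congr rfl fun a _ => by rw [hones a]]
    simp
  have hsplit : ∑ p ∈ (Finset.univ.filter fun p : Fin L × Fin L => p.1 ≠ p.2),
      (∑ j, X p.1 j * X p.2 j) ^ 2 = Ssum - L := by
    have htot := Finset.sum_filter_add_sum_filter_not (univ : Finset (Fin L × Fin L))
      (fun p => p.1 = p.2) (fun p => (∑ j, X p.1 j * X p.2 j) ^ 2)
    have htot2 : ∑ p : Fin L × Fin L, (∑ j, X p.1 j * X p.2 j) ^ 2 = Ssum := by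
      rw [hSsum]; exact Fintype.sum_prod_type _
    have hnotfilt : (Finset.univ.filter fun p : Fin L × Fin L => ¬ p.1 = p.2)
        = (Finset.univ.filter fun p : Fin L × Fin L => p.1 ≠ p.2) := rfl
    rw [hnotfilt, hdiagsum, htot2] at htot
    linarith
  set F := Finset.univ.filter fun p : Fin L × Fin L => p.1 ≠ p.2 with hF
  have hFcard0 : (0:ℝ) < F.card := by exact_mod_cast hne.card_pos
  have hconst : ∑ _p ∈ F, ((Ssum - (L:ℝ)) / F.card)
      ≤ ∑ p ∈ F, (∑ j, X p.1 j * X p.2 j) ^ 2 := by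
    rw [Finset.sum_const, nsmul_eq_mul, mul_div_cancel₀ _ hFcard0.ne', ← hsplit]
  obtain ⟨q, hqF, hqle⟩ := Finset.exists_le_of_sum_le hne hconst
  have hKey : (1/((L:ℝ)-1)) * ((L:ℝ)/_root_.eRank X - 1) ≤ (∑ j, X q.1 j * X q.2 j) ^ 2 := by
    have step1 : (1/((L:ℝ)-1)) * ((L:ℝ)/_root_.eRank X - 1)
        ≤ (1/((L:ℝ)-1)) * ((Ssum - L)/L) :=
      mul_le_mul_of_nonneg_left hLQ2 (by positivity)
    have step2 : (1/((L:ℝ)-1)) * ((Ssum - L)/(L:ℝ)) = (Ssum - L) / ((L:ℝ)*L - L) := by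
      rw [div_mul_eq_mul_div, one_mul, div_div]
      congr 1
      ring
    calc (1/((L:ℝ)-1)) * ((L:ℝ)/_root_.eRank X - 1)
        ≤ (1/((L:ℝ)-1)) * ((Ssum - L)/L) := step1
      _ = (Ssum - L) / ((L:ℝ)*L - L) := step2
      _ = (Ssum - L) / F.card := by rw [hcard]
      _ ≤ _ := hqle
  have hGnn : 0 ≤ ∑ j, X q.1 j * X q.2 j := hnonneg q.1 q.2
  have hsqrtkey : Real.sqrt ((1/((L:ℝ)-1)) * ((L:ℝ)/_root_.eRank X - 1))
      ≤ ∑ j, X q.1 j * X q.2 j := by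
    calc Real.sqrt ((1/((L:ℝ)-1)) * ((L:ℝ)/_root_.eRank X - 1))
        ≤ Real.sqrt ((∑ j, X q.1 j * X q.2 j)^2) := Real.sqrt_le_sqrt hKey
      _ = _ := Real.sqrt_sq hGnn
  -- analytic bound for the chosen pair
  have hsV : (0:ℝ) ≤ Real.sqrt V := Real.sqrt_nonneg _
  have t2 : ∑ k, (P q.1 k - P q.2 k) ^ 2 ≤ ∑ k, (Z q.1 k - Z q.2 k) ^ 2 := by
    simpa only [← hP] using softmax_sq_le hV0 (Z q.1) (Z q.2)
  have t1 : ∑ k, |P q.1 k - P q.2 k|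
      ≤ Real.sqrt V * Real.sqrt (∑ k, (P q.1 k - P q.2 k) ^ 2) := by
    have hch := sq_sum_le_card_mul_sum_sq (s := (univ : Finset (Fin V)))
      (f := fun k => |P q.1 k - P q.2 k|)
    rw [Finset.card_univ, Fintype.card_fin] at hch
    have habs : ∑ k, |P q.1 k - P q.2 k| ^ 2 = ∑ k, (P q.1 k - P q.2 k) ^ 2 :=
      Finset.sum_congr rfl fun k _ => sq_abs _
    rw [habs] at hch
    calc ∑ k, |P q.1 k - P q.2 k|
        = Real.sqrt ((∑ k, |P q.1 k - P q.2 k|) ^ 2) := (Real.sqrt_sq (by positivity)).symm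
      _ ≤ Real.sqrt ((V:ℝ) * ∑ k, (P q.1 k - P q.2 k) ^ 2) := Real.sqrt_le_sqrt hch
      _ = Real.sqrt V * Real.sqrt (∑ k, (P q.1 k - P q.2 k) ^ 2) :=
          Real.sqrt_mul (by positivity) _
  have t3 : Real.sqrt (∑ k, (Z q.1 k - Z q.2 k) ^ 2)
      ≤ ‖Matrix.diagonal g * W‖ * Real.sqrt (2 - 2 * ∑ j, X q.1 j * X q.2 j) := by
    have hzd : ∀ k, Z q.1 k - Z q.2 k = ∑ j, (X q.1 j - X q.2 j) * (g j * W j k) := by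
      intro k
      rw [hZ, hZ, ← Finset.sum_sub_distrib]
      exact Finset.sum_congr rfl fun j _ => by ring
    have hvv : ∑ j, (X q.1 j - X q.2 j) ^ 2 = 2 - 2 * ∑ j, X q.1 j * X q.2 j := by
      have e : ∀ j, (X q.1 j - X q.2 j)^2
          = X q.1 j^2 + X q.2 j^2 - 2*(X q.1 j * X q.2 j) := fun j => by ring
      rw [Finset.sum_congr rfl fun j _ => e j, Finset.sum_sub_distrib,
        Finset.sum_add_distrib, hrow q.1, hrow q.2, ← Finset.mul_sum]
      ring
    have hmv := mulvec_norm_step g W (fun j => X q.1 j - X q.2 j)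
    rw [hvv] at hmv
    rw [Finset.sum_congr rfl fun k (_ : k ∈ univ) => by rw [hzd k]]
    exact hmv
  have hmono : Real.sqrt (2 - 2 * ∑ j, X q.1 j * X q.2 j)
      ≤ Real.sqrt (2 - 2 * Real.sqrt ((1/((L:ℝ)-1)) * ((L:ℝ)/_root_.eRank X - 1))) :=
    Real.sqrt_le_sqrt (by nlinarith [hsqrtkey])
  have hMnn : (0:ℝ) ≤ ‖Matrix.diagonal g * W‖ := norm_nonneg _
  calc F.inf' hne (fun p => (1 / 2) * ∑ k, |P p.1 k - P p.2 k|)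
      ≤ (1/2) * ∑ k, |P q.1 k - P q.2 k| := Finset.inf'_le _ hqF
    _ ≤ (1/2) * (Real.sqrt V * Real.sqrt (∑ k, (P q.1 k - P q.2 k) ^ 2)) := by
        linarith [t1]
    _ ≤ (1/2) * (Real.sqrt V * Real.sqrt (∑ k, (Z q.1 k - Z q.2 k) ^ 2)) := by
        have h := Real.sqrt_le_sqrt t2
        nlinarith [hsV, h]
    _ ≤ (1/2) * (Real.sqrt V * (‖Matrix.diagonal g * W‖ *
          Real.sqrt (2 - 2 * ∑ j, X q.1 j * X q.2 j))) := by
        nlinarith [t3, hsV]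
    _ ≤ (1/2) * (Real.sqrt V * (‖Matrix.diagonal g * W‖ *
          Real.sqrt (2 - 2 * Real.sqrt ((1/((L:ℝ)-1)) * ((L:ℝ)/_root_.eRank X - 1))))) := by
        have h1 := mul_le_mul_of_nonneg_left hmono hMnn
        have h2 := mul_le_mul_of_nonneg_left h1 hsV
        linarith
    _ = (Real.sqrt V / 2) * ‖Matrix.diagonal g * W‖ *
          Real.sqrt (2 - 2 * Real.sqrt ((1 / ((L:ℝ) - 1)) * ((L:ℝ) / _root_.eRank X - 1))) := by
        ring
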